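/- arXiv:1511.07961 — 4 statements merged into one kernel-verified Lean document; each statement's English description precedes it below -/
import Mathlib

section
/- Let V be an m×n real matrix, W an m×k real matrix, and H a k×n real matrix, all with nonnegative entries, and let λ0 > 0. Suppose W′ is obtained from W by the multiplicative update w′_{ij} = w_{ij} · (VHᵀ)_{ij} / ((WHHᵀ)_{ij} + λ0 w_{ij}), where each denominator (WHHᵀ)_{ij} + λ0 w_{ij} is positive. Then ‖V − W′H‖_F² + λ0‖W′‖_F² ≤ ‖V − WH‖_F² + λ0‖W‖_F². -/
open Matrix BigOperators

/-- Squared Frobenius norm of a real matrix. -/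
noncomputable def frobSq {m n : ℕ} (A : Matrix (Fin m) (Fin n) ℝ) : ℝ :=
  ∑ i, ∑ j, (A i j) ^ 2

/-- Pairwise AM-GM bound used in the Lee–Seung argument. -/
lemma pair_bound (a uj ul xj xl : ℝ) (ha : 0 ≤ a) (huj : 0 ≤ uj) (hul : 0 ≤ ul)
    (hxj : uj = 0 → xj = 0) (hxl : ul = 0 → xl = 0) :
    xj * xl * a ≤ ((xj ^ 2 / uj) * ul * a + (xl ^ 2 / ul) * uj * a) / 2 := by
  rcases eq_or_lt_of_le huj with h | hj
  · have : xj = 0 := hxj h.symm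
    simp [this, ← h]
  rcases eq_or_lt_of_le hul with h | hl
  · have : xl = 0 := hxl h.symm
    simp [this, ← h]
  have key : 2 * (xj * xl * a) ≤ (xj ^ 2 / uj) * ul * a + (xl ^ 2 / ul) * uj * a := by
    rw [div_mul_eq_mul_div, div_mul_eq_mul_div, div_mul_eq_mul_div, div_mul_eq_mul_div,
      div_add_div _ _ (ne_of_gt hj) (ne_of_gt hl), le_div_iff₀ (by positivity)]
    nlinarith [mul_nonneg ha (sq_nonneg (xj * ul - xl * uj))]
  linarith

/-- Quadratic-form descent for one row. -/
lemma row_step {k : ℕ} (A : Fin k → Fin k → ℝ)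
    (hAs : ∀ j l, A j l = A l j) (hA : ∀ j l, 0 ≤ A j l)
    (u b : Fin k → ℝ) (hu : ∀ j, 0 ≤ u j)
    (d : Fin k → ℝ) (hd : ∀ j, d j = ∑ l, u l * A l j) (hdpos : ∀ j, 0 < d j)
    (w' : Fin k → ℝ) (hw' : ∀ j, w' j = u j * b j / d j) :
    ((∑ j, ∑ l, w' j * w' l * A j l) - 2 * ∑ j, w' j * b j) ≤
      ((∑ j, ∑ l, u j * u l * A j l) - 2 * ∑ j, u j * b j) := by
  set x : Fin k → ℝ := fun j => w' j - u j with hxdef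
  have hx0 : ∀ j, u j = 0 → x j = 0 := by
    intro j h
    simp [hxdef, hw' j, h]
  -- identity: S w' = S u + 2 ∑ x d + Q
  have hT1 : ∀ (y : Fin k → ℝ), (∑ j, ∑ l, y j * u l * A j l) = ∑ j, y j * d j := by
    intro y
    refine Finset.sum_congr rfl fun j _ => ?_
    rw [hd j, Finset.mul_sum]
    refine Finset.sum_congr rfl fun l _ => ?_
    rw [hAs j l]; ring
  have hT2 : (∑ j, ∑ l, u j * x l * A j l) = ∑ j, x j * d j := by
    rw [Finset.sum_comm]
    rw [← hT1 x]
    refine Finset.sum_congr rfl fun j _ => Finset.sum_congr rfl fun l _ => ?_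
    rw [hAs l j]; ring
  have key : (∑ j, ∑ l, w' j * w' l * A j l)
      = (∑ j, ∑ l, u j * u l * A j l) + 2 * (∑ j, x j * d j)
        + ∑ j, ∑ l, x j * x l * A j l := by
    have expand1 : (∑ j, ∑ l, w' j * w' l * A j l)
        = ∑ j, ∑ l, (u j * u l * A j l + x j * u l * A j l + u j * x l * A j l
            + x j * x l * A j l) := by
      refine Finset.sum_congr rfl fun j _ => Finset.sum_congr rfl fun l _ => ?_
      have h1 : w' j = u j + x j := by simp [hxdef]
      have h2 : w' l = u l + x l := by simp [hxdef]
      rw [h1, h2]; ring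
    rw [expand1]
    simp only [Finset.sum_add_distrib]
    rw [hT1 x, hT2]
    ring
  -- bound Q by the diagonal majorant
  have Qbound : (∑ j, ∑ l, x j * x l * A j l) ≤ ∑ j, x j ^ 2 / u j * d j := by
    have step1 : (∑ j, ∑ l, x j * x l * A j l)
        ≤ ∑ j, ∑ l, ((x j ^ 2 / u j) * u l * A j l + (x l ^ 2 / u l) * u j * A j l) / 2 := by
      refine Finset.sum_le_sum fun j _ => Finset.sum_le_sum fun l _ => ?_
      exact pair_bound (A j l) (u j) (u l) (x j) (x l) (hA j l) (hu j) (hu l) (hx0 j) (hx0 l)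
    have hswap : (∑ j, ∑ l, (x l ^ 2 / u l) * u j * A j l)
        = ∑ j, ∑ l, (x j ^ 2 / u j) * u l * A j l := by
      rw [Finset.sum_comm]
      refine Finset.sum_congr rfl fun j _ => Finset.sum_congr rfl fun l _ => ?_
      rw [hAs l j]
    have hfirst : (∑ j, ∑ l, (x j ^ 2 / u j) * u l * A j l) = ∑ j, x j ^ 2 / u j * d j := by
      refine Finset.sum_congr rfl fun j _ => ?_
      rw [hd j, Finset.mul_sum]
      refine Finset.sum_congr rfl fun l _ => ?_
      rw [hAs j l]; ring
    calc (∑ j, ∑ l, x j * x l * A j l)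
        ≤ ∑ j, ∑ l, ((x j ^ 2 / u j) * u l * A j l + (x l ^ 2 / u l) * u j * A j l) / 2 :=
          step1
      _ = ((∑ j, ∑ l, (x j ^ 2 / u j) * u l * A j l)
            + ∑ j, ∑ l, (x l ^ 2 / u l) * u j * A j l) / 2 := by
          simp only [add_div, Finset.sum_add_distrib, Finset.sum_div]
      _ = ∑ j, x j ^ 2 / u j * d j := by rw [hswap, hfirst]; ring
  -- per-coordinate descent
  have coord : ∀ j, 2 * (x j * d j) - 2 * (x j * b j) + x j ^ 2 / u j * d j ≤ 0 := by
    intro j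
    rcases eq_or_lt_of_le (hu j) with h | hj
    · have hx : x j = 0 := hx0 j h.symm
      simp only [hx]
      norm_num
    · have hx : x j = u j * b j / d j - u j := by simp [hxdef, hw' j]
      have heq : 2 * (x j * d j) - 2 * (x j * b j) + x j ^ 2 / u j * d j
          = -(u j * (b j - d j) ^ 2 / d j) := by
        rw [hx]
        field_simp [hj.ne', (hdpos j).ne']
        ring
      rw [heq, neg_nonpos]
      exact div_nonneg (mul_nonneg hj.le (sq_nonneg _)) (hdpos j).le
  have total : (2 * (∑ j, x j * d j) - 2 * ∑ j, x j * b j) + ∑ j, x j ^ 2 / u j * d j ≤ 0 := by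
    have : (∑ j, (2 * (x j * d j) - 2 * (x j * b j) + x j ^ 2 / u j * d j)) ≤ 0 :=
      Finset.sum_nonpos fun j _ => coord j
    calc (2 * (∑ j, x j * d j) - 2 * ∑ j, x j * b j) + ∑ j, x j ^ 2 / u j * d j
        = ∑ j, (2 * (x j * d j) - 2 * (x j * b j) + x j ^ 2 / u j * d j) := by
          simp only [Finset.sum_add_distrib, Finset.sum_sub_distrib, Finset.mul_sum]
      _ ≤ 0 := this
  have hwb : (∑ j, w' j * b j) = (∑ j, u j * b j) + ∑ j, x j * b j := by
    rw [← Finset.sum_add_distrib]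
    refine Finset.sum_congr rfl fun j _ => ?_
    simp [hxdef]; ring
  rw [key, hwb]
  nlinarith [Qbound, total]

/-- Expansion of the per-row regularised objective as a quadratic form. -/
lemma expand_row {n k : ℕ} (v : Fin n → ℝ) (H : Matrix (Fin k) (Fin n) ℝ) (lam : ℝ)
    (w : Fin k → ℝ) :
    (∑ t, (v t - ∑ j, w j * H j t) ^ 2) + lam * ∑ j, (w j) ^ 2
      = (∑ t, (v t) ^ 2)
        + ((∑ j, ∑ l, w j * w l * ((∑ t, H j t * H l t) + if j = l then lam else 0))
          - 2 * ∑ j, w j * (∑ t, v t * H j t)) := by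
  have hB : (∑ t, v t * ∑ j, w j * H j t) = ∑ j, w j * (∑ t, v t * H j t) := by
    have h1 : (∑ t, v t * ∑ j, w j * H j t) = ∑ t, ∑ j, v t * (w j * H j t) := by
      refine Finset.sum_congr rfl fun t _ => ?_
      rw [Finset.mul_sum]
    rw [h1, Finset.sum_comm]
    refine Finset.sum_congr rfl fun j _ => ?_
    rw [Finset.mul_sum]
    exact Finset.sum_congr rfl fun t _ => by ring
  have hC : (∑ t, (∑ j, w j * H j t) ^ 2)
      = ∑ j, ∑ l, w j * w l * (∑ t, H j t * H l t) := by
    have h1 : (∑ t, (∑ j, w j * H j t) ^ 2)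
        = ∑ t, ∑ j, ∑ l, (w j * H j t) * (w l * H l t) := by
      refine Finset.sum_congr rfl fun t _ => ?_
      rw [sq, Finset.sum_mul_sum]
    rw [h1, Finset.sum_comm]
    refine Finset.sum_congr rfl fun j _ => ?_
    rw [Finset.sum_comm]
    refine Finset.sum_congr rfl fun l _ => ?_
    rw [Finset.mul_sum]
    exact Finset.sum_congr rfl fun t _ => by ring
  have hD : lam * (∑ j, (w j) ^ 2)
      = ∑ j, ∑ l, w j * w l * (if j = l then lam else 0) := by
    rw [Finset.mul_sum]
    refine Finset.sum_congr rfl fun j _ => ?_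
    have : (∑ l, w j * w l * (if j = l then lam else 0))
        = ∑ l, (if j = l then w j * w l * lam else 0) := by
      refine Finset.sum_congr rfl fun l _ => ?_
      split <;> simp
    rw [this, Finset.sum_ite_eq]
    simp [sq]
    ring
  have hLHS : (∑ t, (v t - ∑ j, w j * H j t) ^ 2)
      = (∑ t, (v t) ^ 2) - 2 * (∑ t, v t * ∑ j, w j * H j t)
        + ∑ t, (∑ j, w j * H j t) ^ 2 := by
    have h1 : (∑ t, (v t - ∑ j, w j * H j t) ^ 2)
        = ∑ t, ((v t) ^ 2 - 2 * (v t * ∑ j, w j * H j t) + (∑ j, w j * H j t) ^ 2) := by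
      refine Finset.sum_congr rfl fun t _ => ?_
      ring
    rw [h1, Finset.sum_add_distrib, Finset.sum_sub_distrib, ← Finset.mul_sum]
  have hsplit : (∑ j, ∑ l, w j * w l * ((∑ t, H j t * H l t) + if j = l then lam else 0))
      = (∑ j, ∑ l, w j * w l * (∑ t, H j t * H l t))
        + ∑ j, ∑ l, w j * w l * (if j = l then lam else 0) := by
    simp only [mul_add, Finset.sum_add_distrib]
  rw [hLHS, hB, hsplit, ← hC, ← hD]
  ring

/-- The regularised objective `‖V − WH‖_F² + λ0‖W‖_F²` is non-increasing under
the multiplicative `W`-update. -/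
theorem w_update_nonincreasing
    {m n k : ℕ}
    (V : Matrix (Fin m) (Fin n) ℝ) (W : Matrix (Fin m) (Fin k) ℝ)
    (H : Matrix (Fin k) (Fin n) ℝ)
    (hV : ∀ i j, 0 ≤ V i j) (hW : ∀ i j, 0 ≤ W i j) (hH : ∀ i j, 0 ≤ H i j)
    (lam0 : ℝ) (hlam0 : 0 < lam0)
    (W' : Matrix (Fin m) (Fin k) ℝ)
    (hWden : ∀ i j, 0 < (W * H * Hᵀ) i j + lam0 * W i j)
    (hW' : ∀ i j, W' i j =
      W i j * (V * Hᵀ) i j / ((W * H * Hᵀ) i j + lam0 * W i j)) :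
    frobSq (V - W' * H) + lam0 * frobSq W' ≤ frobSq (V - W * H) + lam0 * frobSq W := by
  -- matrix entry computations
  have hVH : ∀ i j, (V * Hᵀ) i j = ∑ t, V i t * H j t := by
    intro i j
    simp [Matrix.mul_apply, Matrix.transpose_apply]
  have hden : ∀ i j, (W * H * Hᵀ) i j + lam0 * W i j
      = ∑ l, W i l * ((∑ t, H l t * H j t) + if l = j then lam0 else 0) := by
    intro i j
    have h1 : (W * H * Hᵀ) i j = ∑ l, W i l * (∑ t, H l t * H j t) := by
      simp only [Matrix.mul_apply, Matrix.transpose_apply]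
      have h0 : (∑ t, (∑ l, W i l * H l t) * H j t)
          = ∑ t, ∑ l, W i l * H l t * H j t :=
        Finset.sum_congr rfl fun t _ => by rw [Finset.sum_mul]
      rw [h0, Finset.sum_comm]
      refine Finset.sum_congr rfl fun l _ => ?_
      rw [Finset.mul_sum]
      refine Finset.sum_congr rfl fun t _ => ?_
      ring
    have h2 : lam0 * W i j = ∑ l, W i l * (if l = j then lam0 else 0) := by
      have : (∑ l, W i l * (if l = j then lam0 else 0))
          = ∑ l, (if l = j then W i l * lam0 else 0) := by
        refine Finset.sum_congr rfl fun l _ => ?_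
        split <;> simp
      rw [this, Finset.sum_ite_eq']
      simp [mul_comm]
    rw [h1, h2]
    simp only [mul_add, Finset.sum_add_distrib]
  -- reduce to per-row inequality
  have frob1 : ∀ (M : Matrix (Fin m) (Fin k) ℝ),
      frobSq (V - M * H) + lam0 * frobSq M
        = ∑ i, ((∑ t, (V i t - ∑ j, M i j * H j t) ^ 2) + lam0 * ∑ j, (M i j) ^ 2) := by
    intro M
    unfold frobSq
    rw [Finset.mul_sum, ← Finset.sum_add_distrib]
    refine Finset.sum_congr rfl fun i _ => ?_
    simp [Matrix.sub_apply, Matrix.mul_apply]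
  rw [frob1 W', frob1 W]
  refine Finset.sum_le_sum fun i _ => ?_
  -- per-row: use expand_row and row_step
  set A : Fin k → Fin k → ℝ :=
    fun j l => (∑ t, H j t * H l t) + if j = l then lam0 else 0 with hAdef
  have hAs : ∀ j l, A j l = A l j := by
    intro j l
    simp only [hAdef]
    congr 1
    · exact Finset.sum_congr rfl fun t _ => mul_comm _ _
    · simp [eq_comm]
  have hA : ∀ j l, 0 ≤ A j l := by
    intro j l
    have h1 : 0 ≤ ∑ t, H j t * H l t :=
      Finset.sum_nonneg fun t _ => mul_nonneg (hH j t) (hH l t)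
    have h2 : (0:ℝ) ≤ if j = l then lam0 else 0 := by
      split
      · exact hlam0.le
      · exact le_refl 0
    simp only [hAdef]
    linarith
  have hdpos : ∀ j, 0 < ∑ l, W i l * A l j := by
    intro j
    have := hWden i j
    rwa [hden i j] at this
  have hw'i : ∀ j, W' i j = W i j * (∑ t, V i t * H j t) / (∑ l, W i l * A l j) := by
    intro j
    rw [hW' i j, hVH i j, hden i j]
  have step := row_step A hAs hA (fun j => W i j) (fun j => ∑ t, V i t * H j t)
    (fun j => hW i j) (fun j => ∑ l, W i l * A l j) (fun j => rfl) hdpos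
    (fun j => W' i j) hw'i
  rw [expand_row (fun t => V i t) H lam0 (fun j => W' i j),
    expand_row (fun t => V i t) H lam0 (fun j => W i j)]
  exact add_le_add_right step _
end

section
/- Let V ∈ ℝ^{m×n}, W ∈ ℝ^{m×k}, H, H_ideal ∈ ℝ^{k×n} be real matrices with W and H entrywise nonnegative, let λ1, λ2 ≥ 0, fix indices i, j with h^t = H_{ij} > 0, and let F_{ij} : ℝ → ℝ be the NMF-Guttman objective f(W,H) viewed as a function of the single entry H_{ij}. Set φ_{ij} = ((WᵀWH)_{ij} + λ1 h^t + 6λ2 (h^t)³ + λ2 h^t)/h^t and define G(h, h^t) = F_{ij}(h^t) + F_{ij}′(h^t)(h − h^t) + φ_{ij}(h − h^t)². Then G(h, h^t) ≥ F_{ij}(h^t) + F_{ij}′(h^t)(h − h^t) + (1/2)F_{ij}″(h^t)(h − h^t)² for all h ∈ ℝ, i.e. G dominates the second-order Taylor polynomial of F_{ij} at h^t, and G(h^t, h^t) = F_{ij}(h^t). -/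
open Matrix BigOperators

/-- The NMF-Guttman objective. -/
noncomputable def fObj {m n k : ℕ} (V : Matrix (Fin m) (Fin n) ℝ)
    (Hideal : Matrix (Fin k) (Fin n) ℝ) (lam0 lam1 lam2 : ℝ)
    (W : Matrix (Fin m) (Fin k) ℝ) (H : Matrix (Fin k) (Fin n) ℝ) : ℝ :=
  frobSq (V - W * H) + lam0 * frobSq W + lam1 * frobSq (H - Hideal)
    + lam2 * frobSq (H ⊙ H - H)

/-- The matrix obtained from `A` by replacing its `(i,j)` entry with `x`. -/
def updEntry {k n : ℕ} (A : Matrix (Fin k) (Fin n) ℝ) (i : Fin k) (j : Fin n)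
    (x : ℝ) : Matrix (Fin k) (Fin n) ℝ :=
  fun a b => if a = i ∧ b = j then x else A a b

lemma sum_ite_pair {k n : ℕ} (i : Fin k) (j : Fin n) (x : ℝ) (y : Fin k → Fin n → ℝ) :
    ∑ a : Fin k, ∑ b : Fin n, (if a = i ∧ b = j then x else y a b)
      = x + ∑ a : Fin k, ∑ b : Fin n, (if a = i ∧ b = j then 0 else y a b) := by
  have h : ∀ a b, (if a = i ∧ b = j then x else y a b)
      = (if a = i ∧ b = j then x else 0) + (if a = i ∧ b = j then 0 else y a b) := by
    intro a b; split <;> simp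
  simp only [h, Finset.sum_add_distrib]
  congr 1
  simp [ite_and, Finset.sum_ite_eq']

lemma fObj_poly {m n k : ℕ}
    (V : Matrix (Fin m) (Fin n) ℝ) (W : Matrix (Fin m) (Fin k) ℝ)
    (H Hideal : Matrix (Fin k) (Fin n) ℝ) (lam0 lam1 lam2 : ℝ)
    (i : Fin k) (j : Fin n) :
    ∃ b1 b0 : ℝ, ∀ h : ℝ,
      fObj V Hideal lam0 lam1 lam2 W (updEntry H i j h)
        = lam2*h^4 - 2*lam2*h^3 + ((Wᵀ * W) i i + lam1 + lam2)*h^2 + b1*h + b0 := by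
  have hSW : (Wᵀ * W) i i = ∑ a, (W a i)^2 := by
    simp [Matrix.mul_apply, sq]
  refine ⟨-2*(∑ a, (V a j - (W*H) a j) * W a i) - 2*(∑ a, (W a i)^2)*(H i j)
      - 2*lam1*(Hideal i j),
    (∑ a, ∑ b, (V a b - (W*H) a b)^2) + lam0 * frobSq W
      + lam1 * (∑ a, ∑ b, (if a = i ∧ b = j then 0 else (H a b - Hideal a b)^2))
      + lam2 * (∑ a, ∑ b, (if a = i ∧ b = j then 0 else (H a b * H a b - H a b)^2))
      + 2*(∑ a, (V a j - (W*H) a j) * W a i)*(H i j) + (∑ a, (W a i)^2)*(H i j)^2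
      + lam1 * (Hideal i j)^2,
    fun h => ?_⟩
  have hmul : ∀ (a : Fin m) (b : Fin n), (W * updEntry H i j h) a b
      = (W*H) a b + (if b = j then W a i * (h - H i j) else 0) := by
    intro a b
    by_cases hb : b = j
    · rw [hb, if_pos rfl]
      simp only [Matrix.mul_apply, updEntry, and_true]
      have key : ∀ l : Fin k, W a l * (if l = i then h else H l j)
          = W a l * H l j + (if l = i then W a l * (h - H i j) else 0) := by
        intro l; by_cases hl : l = i
        · rw [hl, if_pos rfl, if_pos rfl]; ring
        · rw [if_neg hl, if_neg hl]; ring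
      simp only [key, Finset.sum_add_distrib, Finset.sum_ite_eq', Finset.mem_univ, if_pos]
    · simp only [Matrix.mul_apply, updEntry, hb, and_false, if_false, if_neg hb, add_zero]
  have ht1 : frobSq (V - W * updEntry H i j h)
      = (∑ a, ∑ b, (V a b - (W*H) a b)^2)
        + ((h - H i j) * (-2*(∑ a, (V a j - (W*H) a j) * W a i))
          + (h - H i j)^2 * (∑ a, (W a i)^2)) := by
    unfold frobSq
    have step : ∀ a b, ((V - W * updEntry H i j h) a b)^2
        = (V a b - (W*H) a b)^2
          + (if b = j then (-2*(V a j - (W*H) a j)*(W a i*(h-H i j)) + (W a i*(h-H i j))^2) else 0) := by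
      intro a b
      rw [Matrix.sub_apply, hmul a b]
      by_cases hb : b = j
      · rw [hb, if_pos rfl, if_pos rfl]; ring
      · rw [if_neg hb, if_neg hb]; ring
    simp only [step, Finset.sum_add_distrib, Finset.sum_ite_eq', Finset.mem_univ, if_pos]
    congr 1
    have expand : ∑ a, (-2*(V a j - (W*H) a j)*(W a i*(h-H i j)) + (W a i*(h-H i j))^2)
        = (∑ a, (V a j - (W*H) a j) * W a i) * (-2*(h - H i j))
          + (∑ a, (W a i)^2) * ((h - H i j)^2) := by
      rw [Finset.sum_mul, Finset.sum_mul, ← Finset.sum_add_distrib]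
      apply Finset.sum_congr rfl
      intro a _
      ring
    rw [← Finset.sum_add_distrib, expand]
    ring
  have ht2 : frobSq (updEntry H i j h - Hideal)
      = (h - Hideal i j)^2 + ∑ a, ∑ b, (if a = i ∧ b = j then 0 else (H a b - Hideal a b)^2) := by
    unfold frobSq
    have step : ∀ a b, ((updEntry H i j h - Hideal) a b)^2
        = (if a = i ∧ b = j then (h - Hideal i j)^2 else (H a b - Hideal a b)^2) := by
      intro a b
      rw [Matrix.sub_apply]
      unfold updEntry
      split
      · next hc => obtain ⟨rfl, rfl⟩ := hc; rfl
      · rfl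
    simp only [step]
    exact sum_ite_pair i j _ _
  have ht3 : frobSq (updEntry H i j h ⊙ updEntry H i j h - updEntry H i j h)
      = (h*h - h)^2 + ∑ a, ∑ b, (if a = i ∧ b = j then 0 else (H a b * H a b - H a b)^2) := by
    unfold frobSq
    have step : ∀ a b, ((updEntry H i j h ⊙ updEntry H i j h - updEntry H i j h) a b)^2
        = (if a = i ∧ b = j then (h*h - h)^2 else (H a b * H a b - H a b)^2) := by
      intro a b
      rw [Matrix.sub_apply, Matrix.hadamard_apply]
      unfold updEntry
      split <;> rfl
    simp only [step]
    exact sum_ite_pair i j _ _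
  unfold fObj
  rw [ht1, ht2, ht3, hSW]
  ring

lemma quartic_hasDerivAt (a4 a3 a2 a1 a0 x : ℝ) :
    HasDerivAt (fun h : ℝ => a4*h^4 - a3*h^3 + a2*h^2 + a1*h + a0)
      (4*a4*x^3 - 3*a3*x^2 + 2*a2*x + a1) x := by
  have h4 := (hasDerivAt_pow 4 x).const_mul a4
  have h3 := (hasDerivAt_pow 3 x).const_mul a3
  have h2 := (hasDerivAt_pow 2 x).const_mul a2
  have h1 := (hasDerivAt_id x).const_mul a1
  have := (((h4.sub h3).add h2).add h1).add_const a0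
  exact this.congr_deriv (by push_cast; ring)

lemma cubic_hasDerivAt (a3 a2 a1 a0 x : ℝ) :
    HasDerivAt (fun h : ℝ => a3*h^3 + a2*h^2 + a1*h + a0)
      (3*a3*x^2 + 2*a2*x + a1) x := by
  have h3 := (hasDerivAt_pow 3 x).const_mul a3
  have h2 := (hasDerivAt_pow 2 x).const_mul a2
  have h1 := (hasDerivAt_id x).const_mul a1
  have := ((h3.add h2).add h1).add_const a0
  exact this.congr_deriv (by push_cast; ring)

/-- With `h^t = H_{ij} > 0` and
`φ_{ij} = ((WᵀWH)_{ij} + λ1 h^t + 6λ2 (h^t)³ + λ2 h^t)/h^t`, the function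
`G(h, h^t) = F_{ij}(h^t) + F_{ij}′(h^t)(h − h^t) + φ_{ij}(h − h^t)²` dominates the
second-order Taylor polynomial of `F_{ij}` at `h^t`, and `G(h^t, h^t) = F_{ij}(h^t)`. -/
theorem G_dominates_taylor_polynomial
    {m n k : ℕ}
    (V : Matrix (Fin m) (Fin n) ℝ) (W : Matrix (Fin m) (Fin k) ℝ)
    (H Hideal : Matrix (Fin k) (Fin n) ℝ)
    (hW : ∀ i j, 0 ≤ W i j) (hH : ∀ i j, 0 ≤ H i j)
    (lam0 lam1 lam2 : ℝ) (hlam1 : 0 ≤ lam1) (hlam2 : 0 ≤ lam2)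
    (i : Fin k) (j : Fin n) (hpos : 0 < H i j) :
    let ht : ℝ := H i j
    let Fij : ℝ → ℝ := fun h => fObj V Hideal lam0 lam1 lam2 W (updEntry H i j h)
    let phi : ℝ := ((Wᵀ * W * H) i j + lam1 * ht + 6 * lam2 * ht ^ 3 + lam2 * ht) / ht
    let G : ℝ → ℝ := fun h => Fij ht + deriv Fij ht * (h - ht) + phi * (h - ht) ^ 2
    (∀ h : ℝ, G h ≥ Fij ht + deriv Fij ht * (h - ht)
        + (1 / 2) * deriv (deriv Fij) ht * (h - ht) ^ 2) ∧
    G ht = Fij ht := by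
  intro ht Fij phi G
  obtain ⟨b1, b0, hF⟩ := fObj_poly V W H Hideal lam0 lam1 lam2 i j
  set c2 : ℝ := (Wᵀ * W) i i + lam1 + lam2 with hc2
  have hFeq : Fij = fun h => lam2*h^4 - (2*lam2)*h^3 + c2*h^2 + b1*h + b0 := by
    funext x; exact hF x
  have hD1 : deriv Fij = fun x => (4*lam2)*x^3 - (3*(2*lam2))*x^2 + (2*c2)*x + b1 := by
    funext x
    rw [hFeq]
    exact (quartic_hasDerivAt lam2 (2*lam2) c2 b1 b0 x).deriv
  have hD2 : deriv (deriv Fij) ht = 12*lam2*ht^2 - 12*lam2*ht + 2*c2 := by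
    rw [hD1]
    have : HasDerivAt (fun x : ℝ => (4*lam2)*x^3 + (-(3*(2*lam2)))*x^2 + (2*c2)*x + b1)
        (3*(4*lam2)*ht^2 + 2*(-(3*(2*lam2)))*ht + 2*c2) ht :=
      cubic_hasDerivAt (4*lam2) (-(3*(2*lam2))) (2*c2) b1 ht
    have heq : (fun x : ℝ => (4*lam2)*x^3 - (3*(2*lam2))*x^2 + (2*c2)*x + b1)
        = fun x : ℝ => (4*lam2)*x^3 + (-(3*(2*lam2)))*x^2 + (2*c2)*x + b1 := by
      funext x; ring
    rw [heq, this.deriv]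
    ring
  -- the key inequality phi ≥ (1/2) F''
  have hWW : ∀ l : Fin k, 0 ≤ (Wᵀ * W) i l := by
    intro l
    rw [Matrix.mul_apply]
    exact Finset.sum_nonneg fun a _ => mul_nonneg (hW a i) (hW a l)
  have hX : (Wᵀ * W) i i * H i j ≤ (Wᵀ * W * H) i j := by
    rw [Matrix.mul_apply]
    exact Finset.single_le_sum (f := fun l => (Wᵀ * W) i l * H l j)
      (fun l _ => mul_nonneg (hWW l) (hH l j)) (Finset.mem_univ i)
  have key : (1/2) * deriv (deriv Fij) ht ≤ phi := by
    rw [hD2]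
    show _ ≤ _ / ht
    rw [le_div_iff₀ hpos]
    have h6 : 0 ≤ 6 * lam2 * H i j ^ 2 := by positivity
    show (1/2) * (12*lam2*ht^2 - 12*lam2*ht + 2*c2) * ht
        ≤ (Wᵀ * W * H) i j + lam1 * ht + 6 * lam2 * ht ^ 3 + lam2 * ht
    rw [hc2]
    show (1/2) * (12*lam2*(H i j)^2 - 12*lam2*(H i j) + 2*((Wᵀ * W) i i + lam1 + lam2)) * (H i j)
        ≤ (Wᵀ * W * H) i j + lam1 * (H i j) + 6 * lam2 * (H i j) ^ 3 + lam2 * (H i j)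
    nlinarith [hX, h6]
  refine ⟨fun h => ?_, by simp [G]⟩
  show Fij ht + deriv Fij ht * (h - ht) + phi * (h - ht) ^ 2 ≥ _
  have := mul_le_mul_of_nonneg_right key (sq_nonneg (h - ht))
  linarith [this]
end

section
/- Let V ∈ ℝ^{m×n}, W ∈ ℝ^{m×k}, H, H_ideal ∈ ℝ^{k×n} be real matrices, λ1, λ2 real parameters, fix indices i, j with h = H_{ij} > 0, and let F_{ij} : ℝ → ℝ be the NMF-Guttman objective f(W,H) viewed as a function of the single entry H_{ij}. Set φ_{ij} = ((WᵀWH)_{ij} + λ1 h + 6λ2 h³ + λ2 h)/h and suppose φ_{ij} > 0. Then the quadratic G(·, h) = F_{ij}(h) + F_{ij}′(h)(· − h) + φ_{ij}(· − h)² has unique minimiser h − F_{ij}′(h)/(2φ_{ij}), and this minimiser equals the multiplicative update h · ((WᵀV)_{ij} + 4λ2 h³ + 3λ2 h² + λ1 (H_ideal)_{ij}) / ((WᵀWH)_{ij} + 6λ2 h³ + (λ1+λ2) h). -/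
open Matrix BigOperators

lemma updEntry_self {k n : ℕ} (A : Matrix (Fin k) (Fin n) ℝ) (i : Fin k) (j : Fin n) :
    updEntry A i j (A i j) = A := by
  funext a b
  by_cases hab : a = i ∧ b = j
  · obtain ⟨rfl, rfl⟩ := hab; simp [updEntry]
  · simp [updEntry, hab]

lemma hasDerivAt_updEntry {k n : ℕ} (H : Matrix (Fin k) (Fin n) ℝ) (i : Fin k) (j : Fin n)
    (a : Fin k) (b : Fin n) (ht : ℝ) :
    HasDerivAt (fun h : ℝ => updEntry H i j h a b) (if a = i ∧ b = j then (1:ℝ) else 0) ht := by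
  by_cases hab : a = i ∧ b = j
  · simpa [updEntry, hab] using hasDerivAt_id' ht
  · simpa [updEntry, hab] using hasDerivAt_const ht (H a b)

lemma sumS1 {m n k : ℕ} (V : Matrix (Fin m) (Fin n) ℝ) (W : Matrix (Fin m) (Fin k) ℝ)
    (H : Matrix (Fin k) (Fin n) ℝ) (i : Fin k) (j : Fin n) :
    (∑ a, ∑ b, 2 * (V a b - ∑ c, W a c * H c b) ^ 1 *
        (0 - ∑ c, W a c * (if c = i ∧ b = j then (1:ℝ) else 0)))
      = 2 * ((Wᵀ * W * H) i j - (Wᵀ * V) i j) := by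
  rw [Matrix.mul_assoc]
  simp only [Matrix.mul_apply, Matrix.transpose_apply, pow_one]
  have hin : ∀ a : Fin m, (∑ b, 2 * (V a b - ∑ c, W a c * H c b) *
      (0 - ∑ c, W a c * (if c = i ∧ b = j then (1:ℝ) else 0)))
      = 2 * (V a j - ∑ c, W a c * H c j) * (0 - W a i) := by
    intro a
    rw [Finset.sum_eq_single_of_mem j (Finset.mem_univ j)]
    · simp [Finset.sum_ite_eq', mul_ite]
    · intro b _ hb; simp [hb]
  rw [Finset.sum_congr rfl fun a _ => hin a]
  rw [mul_sub, Finset.mul_sum, Finset.mul_sum, ← Finset.sum_sub_distrib]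
  exact Finset.sum_congr rfl fun a _ => by ring

lemma sumS2 {n k : ℕ} (H Hideal : Matrix (Fin k) (Fin n) ℝ) (i : Fin k) (j : Fin n) :
    (∑ a, ∑ b, 2 * (H a b - Hideal a b) ^ 1 *
        ((if a = i ∧ b = j then (1:ℝ) else 0) - 0)) = 2 * (H i j - Hideal i j) := by
  simp [pow_one, mul_ite, mul_one, mul_zero, ite_and, Finset.sum_ite_eq, Finset.sum_ite_eq']

lemma sumS3 {n k : ℕ} (H : Matrix (Fin k) (Fin n) ℝ) (i : Fin k) (j : Fin n) :
    (∑ a, ∑ b, 2 * (H a b * H a b - H a b) ^ 1 *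
        (((if a = i ∧ b = j then (1:ℝ) else 0) * H a b
          + H a b * (if a = i ∧ b = j then (1:ℝ) else 0))
          - (if a = i ∧ b = j then (1:ℝ) else 0)))
      = 2 * (H i j * H i j - H i j) * (2 * H i j - 1) := by
  rw [Finset.sum_eq_single_of_mem i (Finset.mem_univ i)]
  · rw [Finset.sum_eq_single_of_mem j (Finset.mem_univ j)]
    · rw [if_pos ⟨rfl, rfl⟩]; ring
    · intro b _ hb; simp [hb]
  · intro a _ ha; simp [ha]

lemma deriv_Fij {m n k : ℕ} (V : Matrix (Fin m) (Fin n) ℝ) (W : Matrix (Fin m) (Fin k) ℝ)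
    (H Hideal : Matrix (Fin k) (Fin n) ℝ) (lam0 lam1 lam2 : ℝ) (i : Fin k) (j : Fin n) :
    HasDerivAt (fun h => fObj V Hideal lam0 lam1 lam2 W (updEntry H i j h))
      (2 * ((Wᵀ * W * H) i j - (Wᵀ * V) i j)
        + lam1 * (2 * (H i j - Hideal i j))
        + lam2 * (2 * (H i j * H i j - H i j) * (2 * H i j - 1))) (H i j) := by
  have key : HasDerivAt (fun h => fObj V Hideal lam0 lam1 lam2 W (updEntry H i j h))
      ((∑ a, ∑ b, 2 * (V a b - ∑ c, W a c * H c b) ^ 1 *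
          (0 - ∑ c, W a c * (if c = i ∧ b = j then (1:ℝ) else 0))) + 0
        + lam1 * (∑ a, ∑ b, 2 * (H a b - Hideal a b) ^ 1 *
            ((if a = i ∧ b = j then (1:ℝ) else 0) - 0))
        + lam2 * (∑ a, ∑ b, 2 * (H a b * H a b - H a b) ^ 1 *
            (((if a = i ∧ b = j then (1:ℝ) else 0) * H a b
              + H a b * (if a = i ∧ b = j then (1:ℝ) else 0))
              - (if a = i ∧ b = j then (1:ℝ) else 0)))) (H i j) := by
    have hF : (fun h => fObj V Hideal lam0 lam1 lam2 W (updEntry H i j h))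
        = fun h => (∑ a, ∑ b, (V a b - ∑ c, W a c * updEntry H i j h c b) ^ 2)
          + lam0 * frobSq W
          + (lam1 * ∑ a, ∑ b, (updEntry H i j h a b - Hideal a b) ^ 2)
          + (lam2 * ∑ a, ∑ b, (updEntry H i j h a b * updEntry H i j h a b - updEntry H i j h a b) ^ 2) := by
      funext h
      simp [fObj, frobSq, Matrix.sub_apply, Matrix.mul_apply, Matrix.hadamard_apply]
    rw [hF]
    refine HasDerivAt.add (HasDerivAt.add (HasDerivAt.add ?_ (hasDerivAt_const _ _)) ?_) ?_
    · refine HasDerivAt.fun_sum fun a _ => HasDerivAt.fun_sum fun b _ => ?_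
      have h1 : HasDerivAt (fun h : ℝ => ∑ c, W a c * updEntry H i j h c b)
          (∑ c, W a c * (if c = i ∧ b = j then (1:ℝ) else 0)) (H i j) :=
        HasDerivAt.fun_sum fun c _ => (hasDerivAt_updEntry H i j c b (H i j)).const_mul (W a c)
      have := ((hasDerivAt_const (H i j) (V a b)).fun_sub h1).fun_pow 2
      simpa [updEntry_self] using this
    · refine (HasDerivAt.fun_sum fun a _ => HasDerivAt.fun_sum fun b _ => ?_).const_mul lam1
      have := ((hasDerivAt_updEntry H i j a b (H i j)).fun_sub (hasDerivAt_const _ (Hideal a b))).fun_pow 2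
      simpa [updEntry_self] using this
    · refine (HasDerivAt.fun_sum fun a _ => HasDerivAt.fun_sum fun b _ => ?_).const_mul lam2
      have := (((hasDerivAt_updEntry H i j a b (H i j)).fun_mul (hasDerivAt_updEntry H i j a b (H i j))).fun_sub
        (hasDerivAt_updEntry H i j a b (H i j))).fun_pow 2
      simpa [updEntry_self] using this
  rw [sumS1 V W H i j, sumS2 H Hideal i j, sumS3 H i j, add_zero] at key
  exact key

/-- With `h = H_{ij} > 0` and `φ_{ij} > 0`, the quadratic
`G(·, h) = F_{ij}(h) + F_{ij}′(h)(· − h) + φ_{ij}(· − h)²` has unique minimiser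
`h − F_{ij}′(h)/(2φ_{ij})`, and this minimiser equals the multiplicative update
`h ((WᵀV)_{ij} + 4λ2 h³ + 3λ2 h² + λ1 (H_ideal)_{ij}) / ((WᵀWH)_{ij} + 6λ2 h³ + (λ1+λ2) h)`. -/
theorem quadratic_minimiser_is_multiplicative_update
    {m n k : ℕ}
    (V : Matrix (Fin m) (Fin n) ℝ) (W : Matrix (Fin m) (Fin k) ℝ)
    (H Hideal : Matrix (Fin k) (Fin n) ℝ)
    (lam0 lam1 lam2 : ℝ) (i : Fin k) (j : Fin n) (hpos : 0 < H i j) :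
    let ht : ℝ := H i j
    let Fij : ℝ → ℝ := fun h => fObj V Hideal lam0 lam1 lam2 W (updEntry H i j h)
    let phi : ℝ := ((Wᵀ * W * H) i j + lam1 * ht + 6 * lam2 * ht ^ 3 + lam2 * ht) / ht
    let G : ℝ → ℝ := fun h => Fij ht + deriv Fij ht * (h - ht) + phi * (h - ht) ^ 2
    let hstar : ℝ := ht - deriv Fij ht / (2 * phi)
    0 < phi →
      (∀ h : ℝ, G hstar ≤ G h) ∧
      (∀ h : ℝ, (∀ h' : ℝ, G h ≤ G h') → h = hstar) ∧
      hstar = ht * ((Wᵀ * V) i j + 4 * lam2 * ht ^ 3 + 3 * lam2 * ht ^ 2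
          + lam1 * Hideal i j)
        / ((Wᵀ * W * H) i j + 6 * lam2 * ht ^ 3 + (lam1 + lam2) * ht) := by
  intro ht Fij phi G hstar hphi
  have hphi' : phi ≠ 0 := ne_of_gt hphi
  have hht : ht ≠ 0 := ne_of_gt hpos
  have hG : ∀ x : ℝ, G x = Fij ht + deriv Fij ht * (x - ht) + phi * (x - ht) ^ 2 := fun _ => rfl
  have hhs : hstar = ht - deriv Fij ht / (2 * phi) := rfl
  have key : ∀ x : ℝ, G x = G hstar + phi * (x - hstar) ^ 2 := by
    intro x
    rw [hG x, hG hstar, hhs]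
    field_simp
    ring
  refine ⟨?_, ?_, ?_⟩
  · intro h
    rw [key h]
    nlinarith [sq_nonneg (h - hstar)]
  · intro h hmin
    have h1 := hmin hstar
    rw [key h] at h1
    have h2 : phi * (h - hstar) ^ 2 ≤ 0 := by linarith
    have h4 : (h - hstar) ^ 2 = 0 :=
      le_antisymm (by nlinarith [sq_nonneg (h - hstar)]) (sq_nonneg _)
    have h5 : h - hstar = 0 := by
      exact pow_eq_zero_iff (by norm_num) |>.mp h4
    linarith
  · have hD : deriv Fij ht = 2 * ((Wᵀ * W * H) i j - (Wᵀ * V) i j)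
        + lam1 * (2 * (H i j - Hideal i j))
        + lam2 * (2 * (H i j * H i j - H i j) * (2 * H i j - 1)) :=
      (deriv_Fij V W H Hideal lam0 lam1 lam2 i j).deriv
    rw [hhs, hD]
    rw [show phi = ((Wᵀ * W * H) i j + lam1 * ht + 6 * lam2 * ht ^ 3 + lam2 * ht) / ht from rfl]
    rw [show ht = H i j from rfl] at *
    have hE : 0 < (Wᵀ * W * H) i j + lam1 * H i j + 6 * lam2 * H i j ^ 3 + lam2 * H i j := by
      have := mul_pos hphi hpos
      rw [show phi = ((Wᵀ * W * H) i j + lam1 * H i j + 6 * lam2 * H i j ^ 3 + lam2 * H i j) / H i j from rfl] at this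
      rw [div_mul_cancel₀ _ (ne_of_gt hpos)] at this
      exact this
    have hE' : (Wᵀ * W * H) i j + lam1 * H i j + 6 * lam2 * H i j ^ 3 + lam2 * H i j ≠ 0 :=
      ne_of_gt hE
    have hden : (Wᵀ * W * H) i j + 6 * lam2 * H i j ^ 3 + (lam1 + lam2) * H i j
        = (Wᵀ * W * H) i j + lam1 * H i j + 6 * lam2 * H i j ^ 3 + lam2 * H i j := by ring
    rw [hden]
    field_simp
    linear_combination -(mul_inv_cancel₀ hE')
end

section
/- Let V ∈ ℝ^{m×n}, W ∈ ℝ^{m×k}, H, H_ideal ∈ ℝ^{k×n} be real matrices and λ0, λ1, λ2 real parameters, and define f(W,H) = ‖V − WH‖_F² + λ0‖W‖_F² + λ1‖H − H_ideal‖_F² + λ2‖H∘H − H‖_F². Then, for fixed W, the partial derivative of f with respect to the entry h_{ij} of H equals 2(WᵀWH − WᵀV + (λ1+λ2)H − λ1 H_ideal)_{ij} + 4λ2 h_{ij}³ − 6λ2 h_{ij}². -/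
open Matrix BigOperators

/-- For fixed `W`, the partial derivative of the NMF-Guttman objective `f` with
respect to the entry `h_{ij}` of `H` equals
`2(WᵀWH − WᵀV + (λ1+λ2)H − λ1 H_ideal)_{ij} + 4λ2 h_{ij}³ − 6λ2 h_{ij}²`. -/
theorem partial_derivative_wrt_H_entry
    {m n k : ℕ}
    (V : Matrix (Fin m) (Fin n) ℝ) (W : Matrix (Fin m) (Fin k) ℝ)
    (H Hideal : Matrix (Fin k) (Fin n) ℝ)
    (lam0 lam1 lam2 : ℝ) (i : Fin k) (j : Fin n) :
    HasDerivAt (fun h : ℝ => fObj V Hideal lam0 lam1 lam2 W (updEntry H i j h))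
      (2 * ((Wᵀ * W * H) i j - (Wᵀ * V) i j + (lam1 + lam2) * H i j
          - lam1 * Hideal i j)
        + 4 * lam2 * (H i j) ^ 3 - 6 * lam2 * (H i j) ^ 2)
      (H i j) := by
  have hupd : updEntry H i j (H i j) = H := by
    funext a b
    simp only [updEntry]
    split
    · next hab => rw [hab.1, hab.2]
    · rfl
  have hent : ∀ (a : Fin k) (b : Fin n),
      HasDerivAt (fun h : ℝ => updEntry H i j h a b)
        (if a = i ∧ b = j then 1 else 0) (H i j) := by
    intro a b
    by_cases hab : a = i ∧ b = j
    · simpa [updEntry, hab] using (hasDerivAt_id' (H i j))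
    · simpa [updEntry, hab] using (hasDerivAt_const (H i j) (H a b))
  -- term 1
  have h1 : HasDerivAt (fun h : ℝ => frobSq (V - W * updEntry H i j h))
      (∑ p, ∑ q, 2 * ((V - W * H) p q) ^ 1 *
        (0 - ∑ r, W p r * (if r = i ∧ q = j then 1 else 0))) (H i j) := by
    unfold frobSq
    apply HasDerivAt.fun_sum; intro p _
    apply HasDerivAt.fun_sum; intro q _
    have hinner : HasDerivAt (fun h : ℝ => (V - W * updEntry H i j h) p q)
        (0 - ∑ r, W p r * (if r = i ∧ q = j then 1 else 0)) (H i j) := by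
      simp only [Matrix.sub_apply, Matrix.mul_apply]
      exact (hasDerivAt_const _ _).sub
        (HasDerivAt.fun_sum fun r _ => ((hent r q).const_mul (W p r)))
    have := hinner.fun_pow 2
    simpa [hupd] using this
  -- term 2
  have h2 : HasDerivAt (fun _ : ℝ => lam0 * frobSq W) 0 (H i j) :=
    hasDerivAt_const _ _
  -- term 3
  have h3 : HasDerivAt (fun h : ℝ => lam1 * frobSq (updEntry H i j h - Hideal))
      (lam1 * ∑ a, ∑ b, 2 * ((H - Hideal) a b) ^ 1 *
        ((if a = i ∧ b = j then 1 else 0) - 0)) (H i j) := by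
    apply HasDerivAt.const_mul
    unfold frobSq
    apply HasDerivAt.fun_sum; intro a _
    apply HasDerivAt.fun_sum; intro b _
    have hinner : HasDerivAt (fun h : ℝ => (updEntry H i j h - Hideal) a b)
        ((if a = i ∧ b = j then 1 else 0) - 0) (H i j) := by
      simp only [Matrix.sub_apply]
      exact (hent a b).sub (hasDerivAt_const _ _)
    have := hinner.fun_pow 2
    simpa [hupd] using this
  -- term 4
  have h4 : HasDerivAt
      (fun h : ℝ => lam2 * frobSq (updEntry H i j h ⊙ updEntry H i j h - updEntry H i j h))
      (lam2 * ∑ a, ∑ b, 2 * ((H ⊙ H - H) a b) ^ 1 *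
        ((H a b * (if a = i ∧ b = j then 1 else 0)
          + (if a = i ∧ b = j then 1 else 0) * H a b)
          - (if a = i ∧ b = j then 1 else 0))) (H i j) := by
    apply HasDerivAt.const_mul
    unfold frobSq
    apply HasDerivAt.fun_sum; intro a _
    apply HasDerivAt.fun_sum; intro b _
    have hinner : HasDerivAt
        (fun h : ℝ => (updEntry H i j h ⊙ updEntry H i j h - updEntry H i j h) a b)
        ((H a b * (if a = i ∧ b = j then 1 else 0)
          + (if a = i ∧ b = j then 1 else 0) * H a b)
          - (if a = i ∧ b = j then 1 else 0)) (H i j) := by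
      simp only [Matrix.sub_apply, Matrix.hadamard_apply]
      have := ((hent a b).fun_mul (hent a b)).fun_sub (hent a b)
      simpa [hupd] using this
    have := hinner.fun_pow 2
    simpa [hupd] using this
  have hsum := ((h1.fun_add h2).fun_add h3).fun_add h4
  have hfun : (fun h : ℝ => fObj V Hideal lam0 lam1 lam2 W (updEntry H i j h))
      = fun h : ℝ => frobSq (V - W * updEntry H i j h) + lam0 * frobSq W
        + lam1 * frobSq (updEntry H i j h - Hideal)
        + lam2 * frobSq (updEntry H i j h ⊙ updEntry H i j h - updEntry H i j h) := by
    funext h; rfl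
  rw [hfun]
  convert hsum using 1
  · rfl
  · rfl
  simp only [pow_one, Matrix.sub_apply, Matrix.mul_apply, Matrix.hadamard_apply,
    Matrix.transpose_apply, mul_ite, mul_one, mul_zero, ite_and,
    Finset.sum_ite_eq, Finset.sum_ite_eq', Finset.mem_univ, if_true,
    zero_sub, sub_zero, Finset.mul_sum, Finset.sum_sub_distrib]
  simp only [mul_neg, mul_add, mul_sub, add_mul, sub_mul, mul_ite, ite_mul,
    mul_zero, zero_mul, mul_one, one_mul,
    Finset.sum_add_distrib, Finset.sum_sub_distrib, Finset.sum_neg_distrib,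
    Finset.sum_ite_irrel, Finset.sum_const_zero,
    Finset.sum_ite_eq', Finset.mem_univ, if_true, sub_zero, add_zero, zero_add,
    Finset.mul_sum, Finset.sum_mul]
  ring_nf
  have e1 : ∑ x : Fin m, W x i * V x j * 2 = ∑ x : Fin m, V x j * W x i * 2 :=
    Finset.sum_congr rfl fun x _ => by ring
  have e2 : ∑ x : Fin k, ∑ x_1 : Fin m, W x_1 i * W x_1 x * H x j * 2
      = ∑ x : Fin m, ∑ x_1 : Fin k, W x x_1 * H x_1 j * W x i * 2 := by
    rw [Finset.sum_comm]
    exact Finset.sum_congr rfl fun y _ => Finset.sum_congr rfl fun x _ => by ring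
  rw [e1, e2]
  ring
end
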